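/- Let A₁, A₂ be unital ℂ-algebras, let S, T ∈ A₁ be not nilpotent, let Q ∈ A₂ be nonzero, let p ∈ ℂ[x,y], λ ∈ ℂ, and l, m ≥ 1. If (p^l)⟦S + λ·1, T⟧ = 0 in A₁ and (Q − λ·1)^m = 0 in A₂, then (p^n)⟦S⊗1 + 1⊗Q, T⊗1⟧ = 0 in the algebraic tensor product A₁ ⊗ A₂, where n = l + m − 1. -/

import Mathlib

open scoped TensorProduct

/-- Ordered evaluation: for `p = Σ c_{ij} x^i y^j ∈ ℂ[x,y]` and `S, T` in a unital
ℂ-algebra, `oev p S T = Σ c_{ij} S^i T^j`, keeping all powers of `S` to the left. -/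
noncomputable def oev {A : Type*} [Ring A] [Algebra ℂ A]
    (p : MvPolynomial (Fin 2) ℂ) (S T : A) : A :=
  ∑ m ∈ p.support, p.coeff m • (S ^ m 0 * T ^ m 1)

section Aux
open MvPolynomial
variable {A : Type*} [Ring A] [Algebra ℂ A]

noncomputable def oevLM (S T : A) : MvPolynomial (Fin 2) ℂ →ₗ[ℂ] A :=
  Finsupp.lsum ℂ (fun (m : Fin 2 →₀ ℕ) => LinearMap.toSpanSingleton ℂ A (S ^ m 0 * T ^ m 1)) ∘ₗ
    (AddMonoidAlgebra.coeffLinearEquiv ℂ).toLinearMap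

lemma oev_eq_lm (p : MvPolynomial (Fin 2) ℂ) (S T : A) : oev p S T = oevLM S T p := rfl

lemma oevLM_monomial (S T : A) (m : Fin 2 →₀ ℕ) (c : ℂ) :
    oevLM S T (monomial m c) = c • (S ^ m 0 * T ^ m 1) := by
  rw [oevLM, LinearMap.comp_apply]
  erw [show (AddMonoidAlgebra.coeffLinearEquiv ℂ) (monomial m c) = Finsupp.single m c from rfl,
    Finsupp.lsum_single]; rw [LinearMap.toSpanSingleton_apply]

noncomputable def phi : MvPolynomial (Fin 2) ℂ →ₐ[ℂ] Polynomial (MvPolynomial (Fin 2) ℂ) :=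
  aeval ![Polynomial.X + Polynomial.C (X 0), Polynomial.C (X 1)]

lemma phi_monomial (m : Fin 2 →₀ ℕ) (c : ℂ) :
    phi (monomial m c) =
      Polynomial.C (C c * X 1 ^ m 1) * (Polynomial.X + Polynomial.C (X 0)) ^ m 0 := by
  rw [phi, aeval_monomial, Finsupp.prod_fintype _ _ (fun i => pow_zero _), Fin.prod_univ_two]
  simp only [Matrix.cons_val_zero, Matrix.cons_val_one, Matrix.head_cons]
  rw [show (algebraMap ℂ (Polynomial (MvPolynomial (Fin 2) ℂ))) c = Polynomial.C (C c) by rfl]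
  rw [← Polynomial.C_pow]
  simp only [map_mul]
  ring

lemma coeff_phi_monomial (m : Fin 2 →₀ ℕ) (c : ℂ) (k : ℕ) :
    (phi (monomial m c)).coeff k = monomial (m - Finsupp.single 0 k) (c * ((m 0).choose k : ℂ)) := by
  rw [phi_monomial, mul_comm, Polynomial.coeff_mul_C, Polynomial.coeff_X_add_C_pow,
    monomial_eq, Finsupp.prod_fintype _ _ (fun i => pow_zero _), Fin.prod_univ_two]
  simp only [Finsupp.tsub_apply, Finsupp.single_apply, map_mul,
    ← map_natCast (C : ℂ →+* MvPolynomial (Fin 2) ℂ)]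
  norm_num
  ring

lemma coeff_zero_phi (q : MvPolynomial (Fin 2) ℂ) : (phi q).coeff 0 = q := by
  conv_lhs => rw [q.as_sum]
  rw [map_sum, Polynomial.finset_sum_coeff]
  simp only [coeff_phi_monomial, Finsupp.single_zero, Nat.choose_zero_right, Nat.cast_one,
    mul_one, tsub_zero]
  exact q.as_sum.symm

lemma dvd_coeff_phi_pow (p : MvPolynomial (Fin 2) ℂ) (n k : ℕ) :
    p ^ (n - k) ∣ (phi (p ^ n)).coeff k := by
  obtain ⟨r, hr⟩ : ∃ r, phi p = Polynomial.C p + Polynomial.X * r := by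
    have h0 : (phi p - Polynomial.C p).coeff 0 = 0 := by
      simp [coeff_zero_phi]
    obtain ⟨r, hr⟩ := Polynomial.X_dvd_iff.2 h0
    exact ⟨r, by rw [← hr]; ring⟩
  rw [map_pow, hr, add_pow, Polynomial.finset_sum_coeff]
  refine Finset.dvd_sum fun j hj => ?_
  rw [Finset.mem_range] at hj
  rw [mul_assoc, ← Polynomial.C_pow, Polynomial.coeff_C_mul]
  by_cases h : n - j ≤ k
  · exact Dvd.dvd.mul_right (pow_dvd_pow p (by omega)) _
  · rw [mul_pow, mul_assoc, Polynomial.coeff_X_pow_mul' ]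
    simp [h]

lemma juggle (N U V : A) (c : ℂ) (a b e Ck : ℕ) :
    c • (N ^ a * U ^ b * (Ck : A) * V ^ e) = N ^ a * ((c * (Ck : ℂ)) • (U ^ b * V ^ e)) := by
  rw [mul_smul_comm, mul_smul, Nat.cast_smul_eq_nsmul, nsmul_eq_mul]
  congr 1
  rw [(Nat.cast_commute (Ck) (N ^ a * (U ^ b * V ^ e))).eq, mul_assoc (N ^ a * U ^ b),
    (Nat.cast_commute (Ck) (V ^ e)).eq]
  simp [mul_assoc]

lemma oevLM_coeff_phi_monomial (U V : A) (m : Fin 2 →₀ ℕ) (c : ℂ) (k : ℕ) :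
    oevLM U V ((phi (monomial m c)).coeff k)
      = (c * ((m 0).choose k : ℂ)) • (U ^ (m 0 - k) * V ^ m 1) := by
  rw [coeff_phi_monomial, oevLM_monomial]
  simp [Finsupp.tsub_apply, Finsupp.single_apply]

lemma oev_expand (U V N : A) (hc : Commute N U) (q : MvPolynomial (Fin 2) ℂ) (D : ℕ)
    (hD : ∀ m ∈ q.support, m 0 ≤ D) :
    oevLM (U + N) V q = ∑ k ∈ Finset.range (D + 1), N ^ k * oevLM U V ((phi q).coeff k) := by
  have hq : ∀ k, oevLM U V ((phi q).coeff k)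
      = ∑ m ∈ q.support, oevLM U V ((phi (monomial m (coeff m q))).coeff k) := by
    intro k
    conv_lhs => rw [q.as_sum]
    rw [map_sum, Polynomial.finset_sum_coeff, map_sum]
  conv_lhs => rw [q.as_sum]
  rw [map_sum]
  simp only [hq, Finset.mul_sum]
  rw [Finset.sum_comm]
  refine Finset.sum_congr rfl fun m hm => ?_
  rw [oevLM_monomial]
  have hUN : U + N = N + U := add_comm U N
  rw [hUN, Commute.add_pow hc]
  rw [Finset.sum_mul, Finset.smul_sum]
  have hvan : ∀ k ∈ Finset.range (D + 1), k ∉ Finset.range (m 0 + 1) →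
      N ^ k * oevLM U V ((phi (monomial m (coeff m q))).coeff k) = 0 := by
    intro k _ hk
    rw [Finset.mem_range, not_lt] at hk
    rw [oevLM_coeff_phi_monomial, Nat.choose_eq_zero_of_lt (by omega)]
    simp
  rw [← Finset.sum_subset (Finset.range_subset_range.2 (Nat.succ_le_succ (hD m hm))) hvan]
  refine Finset.sum_congr rfl fun k hk => ?_
  rw [oevLM_coeff_phi_monomial]
  exact juggle N U V _ k (m 0 - k) (m 1) _

lemma oevLM_mul_monomial (U V : A) (q : MvPolynomial (Fin 2) ℂ) (m : Fin 2 →₀ ℕ) (c : ℂ) :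
    oevLM U V (q * monomial m c) = c • (U ^ m 0 * oevLM U V q * V ^ m 1) := by
  conv_lhs => rw [q.as_sum, Finset.sum_mul]
  conv_rhs => rw [q.as_sum]
  rw [map_sum, map_sum, Finset.mul_sum, Finset.sum_mul, Finset.smul_sum]
  refine Finset.sum_congr rfl fun m' _ => ?_
  rw [monomial_mul, oevLM_monomial, oevLM_monomial, Finsupp.add_apply, Finsupp.add_apply,
    add_comm (m' 0) (m 0), pow_add, pow_add]
  simp only [smul_smul, mul_smul_comm, smul_mul_assoc]
  rw [mul_comm c]
  congr 1
  simp [mul_assoc]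

lemma oev_mul_zero (U V : A) (q g : MvPolynomial (Fin 2) ℂ) (h : oevLM U V q = 0) :
    oevLM U V (q * g) = 0 := by
  conv_lhs => rw [g.as_sum, Finset.mul_sum]
  rw [map_sum]
  refine Finset.sum_eq_zero fun m _ => ?_
  rw [oevLM_mul_monomial, h]
  simp

lemma main_abstract (U V N : A) (hc : Commute N U) (p : MvPolynomial (Fin 2) ℂ)
    (l m : ℕ) (hm : 1 ≤ m) (hz : oevLM U V (p ^ l) = 0) (hN : N ^ m = 0) :
    oevLM (U + N) V (p ^ (l + m - 1)) = 0 := by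
  set n := l + m - 1 with hn
  have hbound : ∀ s ∈ (p ^ n).support, s 0 ≤ (p ^ n).totalDegree := by
    intro s hs
    refine le_trans ?_ (le_totalDegree hs)
    by_cases h : (0 : Fin 2) ∈ s.support
    · exact Finset.single_le_sum (fun _ _ => Nat.zero_le _) h
    · simp [Finsupp.notMem_support_iff.mp h]
  rw [oev_expand U V N hc _ ((p ^ n).totalDegree) hbound]
  refine Finset.sum_eq_zero fun k _ => ?_
  by_cases hkm : k < m
  · obtain ⟨g, hg⟩ := dvd_coeff_phi_pow p n k
    have hsplit : (phi (p ^ n)).coeff k = p ^ l * (p ^ (n - k - l) * g) := by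
      rw [hg, ← mul_assoc, ← pow_add]
      congr 2
      omega
    rw [hsplit, oev_mul_zero U V _ _ hz, mul_zero]
  · have hNk : N ^ k = 0 := by
      rw [show k = m + (k - m) by omega, pow_add, hN, zero_mul]
    rw [hNk, zero_mul]

lemma oev_map {B : Type*} [Ring B] [Algebra ℂ B] (f : A →ₐ[ℂ] B) (q : MvPolynomial (Fin 2) ℂ)
    (S T : A) : oevLM (f S) (f T) q = f (oevLM S T q) := by
  conv_lhs => rw [q.as_sum]
  conv_rhs => rw [q.as_sum]
  rw [map_sum, map_sum, map_sum]
  refine Finset.sum_congr rfl fun m _ => ?_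
  rw [oevLM_monomial, oevLM_monomial, map_smul, map_mul, map_pow, map_pow]


end Aux

/-- Proposition 6.1: if `(p^l)⟦S + λ·1, T⟧ = 0` and `(Q − λ·1)^m = 0` (with `S, T` not
nilpotent and `Q ≠ 0`), then `(p^n)⟦S⊗1 + 1⊗Q, T⊗1⟧ = 0` where `n = l + m − 1`. -/
theorem nilpotent_perturbation
    {A₁ A₂ : Type*} [Ring A₁] [Algebra ℂ A₁] [Ring A₂] [Algebra ℂ A₂]
    (S T : A₁) (Q : A₂) (hS : ¬IsNilpotent S) (hT : ¬IsNilpotent T) (hQ : Q ≠ 0)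
    (p : MvPolynomial (Fin 2) ℂ) (lam : ℂ) (l m : ℕ) (hl : 1 ≤ l) (hm : 1 ≤ m)
    (h₁ : oev (p ^ l) (S + lam • 1) T = 0) (h₂ : (Q - lam • 1) ^ m = 0) :
    oev (p ^ (l + m - 1))
      (S ⊗ₜ[ℂ] (1 : A₂) + (1 : A₁) ⊗ₜ[ℂ] Q) (T ⊗ₜ[ℂ] (1 : A₂)) = 0 := by
  set U : A₁ ⊗[ℂ] A₂ := (S + lam • 1) ⊗ₜ[ℂ] (1 : A₂) with hU
  set N : A₁ ⊗[ℂ] A₂ := (1 : A₁) ⊗ₜ[ℂ] (Q - lam • 1) with hNdef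
  set V : A₁ ⊗[ℂ] A₂ := T ⊗ₜ[ℂ] (1 : A₂) with hV
  have hUV : S ⊗ₜ[ℂ] (1 : A₂) + (1 : A₁) ⊗ₜ[ℂ] Q = U + N := by
    rw [hU, hNdef, TensorProduct.add_tmul, TensorProduct.tmul_sub]
    rw [show (lam • (1:A₁)) ⊗ₜ[ℂ] (1:A₂) = (1:A₁) ⊗ₜ[ℂ] (lam • (1:A₂)) from
      TensorProduct.smul_tmul lam 1 1]
    abel
  have hcomm : Commute N U := by
    show N * U = U * N
    rw [hU, hNdef, Algebra.TensorProduct.tmul_mul_tmul, Algebra.TensorProduct.tmul_mul_tmul]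
    rw [one_mul, mul_one, one_mul, mul_one]
  have hN : N ^ m = 0 := by
    have : N = Algebra.TensorProduct.includeRight (R := ℂ) (A := A₁) (Q - lam • 1) := rfl
    rw [this, ← map_pow, h₂, map_zero]
  have hz : oevLM U V (p ^ l) = 0 := by
    have hu : U = Algebra.TensorProduct.includeLeft (R := ℂ) (S := ℂ) (B := A₂) (S + lam • 1) := rfl
    have hv : V = Algebra.TensorProduct.includeLeft (R := ℂ) (S := ℂ) (B := A₂) T := rfl
    rw [hu, hv, oev_map, ← oev_eq_lm, h₁, map_zero]
  rw [oev_eq_lm, hUV]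
  exact main_abstract U V N hcomm p l m hm hz hN
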